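/- For every natural number n ≥ 1 and every real t, the sum over m = 0, 1, …, n−1 of |cos(t − m·π/n)| is at most 1 / sin(π/(2n)). -/

import Mathlib

open Real Finset

private lemma sum_sin_AP (n : ℕ) (hn : 1 ≤ n) (θ : ℝ) :
    (∑ j ∈ Finset.range n, Real.sin (((j : ℝ) + θ) * Real.pi / n)) * Real.sin (Real.pi / (2*n)) =
      Real.cos (θ * Real.pi / n - Real.pi / (2*n)) := by
  have hn' : (n : ℝ) ≠ 0 := Nat.cast_ne_zero.mpr (by omega)
  set c : ℝ := θ * Real.pi / n - Real.pi / (2*n) with hc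
  have key : ∀ j : ℕ, Real.sin (((j : ℝ) + θ) * Real.pi / n) * Real.sin (Real.pi/(2*n)) =
      Real.cos (c + (j : ℝ) * Real.pi / n) / 2 - Real.cos (c + ((j : ℝ)+1) * Real.pi / n) / 2 := by
    intro j
    have h1 : Real.cos (c + (j : ℝ) * Real.pi / n) - Real.cos (c + ((j : ℝ)+1) * Real.pi / n)
        = -2 * Real.sin (((c + (j : ℝ) * Real.pi / n) + (c + ((j : ℝ)+1) * Real.pi / n))/2)
            * Real.sin (((c + (j : ℝ) * Real.pi / n) - (c + ((j : ℝ)+1) * Real.pi / n))/2) :=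
      Real.cos_sub_cos _ _
    have e1 : ((c + (j : ℝ) * Real.pi / n) + (c + ((j : ℝ)+1) * Real.pi / n))/2
        = c + (j : ℝ) * Real.pi / n + Real.pi/(2*n) := by field_simp; ring
    have e2 : ((c + (j : ℝ) * Real.pi / n) - (c + ((j : ℝ)+1) * Real.pi / n))/2
        = -(Real.pi/(2*n)) := by field_simp; ring
    have e3 : c + (j : ℝ) * Real.pi / n + Real.pi/(2*n) = ((j : ℝ) + θ) * Real.pi / n := by
      rw [hc]; field_simp; ring
    rw [e1, e2, e3, Real.sin_neg] at h1
    linarith [h1]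
  rw [Finset.sum_mul]
  have := Finset.sum_range_sub' (fun j : ℕ => Real.cos (c + (j : ℝ) * Real.pi / n) / 2) n
  calc ∑ j ∈ Finset.range n, Real.sin (((j : ℝ) + θ) * Real.pi / n) * Real.sin (Real.pi/(2*n))
      = ∑ j ∈ Finset.range n, (Real.cos (c + (j : ℝ) * Real.pi / n) / 2
          - Real.cos (c + ((j : ℝ)+1) * Real.pi / n) / 2) := by
        apply Finset.sum_congr rfl; intro j _; rw [key j]
    _ = Real.cos (c + (0 : ℝ) * Real.pi / n) / 2 - Real.cos (c + (n : ℝ) * Real.pi / n) / 2 := by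
        push_cast at this ⊢; exact this
    _ = Real.cos c := by
        have h2 : c + (n : ℝ) * Real.pi / n = c + Real.pi := by field_simp
        rw [h2, Real.cos_add_pi]
        norm_num
        ring

theorem stmt15 (n : ℕ) (hn : 1 ≤ n) (t : ℝ) :
    ∑ m ∈ Finset.range n, |Real.cos (t - (m : ℝ) * Real.pi / n)| ≤
      1 / Real.sin (Real.pi / (2 * n)) := by
  have hn0 : (0 : ℤ) < n := by exact_mod_cast hn
  have hn' : (n : ℝ) ≠ 0 := Nat.cast_ne_zero.mpr (by omega)
  have hnpos : (0 : ℝ) < n := by positivity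
  set a : ℝ := t / Real.pi + 1/2 with ha
  set N : ℤ := ⌊(n : ℝ) * a⌋ with hN
  set θ : ℝ := Int.fract ((n : ℝ) * a) with hθ
  have hθ0 : 0 ≤ θ := Int.fract_nonneg _
  have hθ1 : θ < 1 := Int.fract_lt_one _
  have hna : (n : ℝ) * a = (N : ℝ) + θ := by rw [hθ, hN]; exact (Int.floor_add_fract _).symm
  -- the index map
  set J : ℕ → ℕ := fun m => ((N - m) % n).toNat with hJ
  have hJlt : ∀ m : ℕ, J m < n := by
    intro m
    have h1 : (N - m) % n < n := Int.emod_lt_of_pos _ hn0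
    have h2 : 0 ≤ (N - m) % n := Int.emod_nonneg _ (by omega)
    simp only [hJ]
    omega
  have hJcast : ∀ m : ℕ, ((J m : ℤ)) = (N - m) % n := by
    intro m
    have h2 : 0 ≤ (N - m) % n := Int.emod_nonneg _ (by omega)
    simp [hJ, Int.toNat_of_nonneg h2]
  have hJinv : ∀ m : ℕ, m < n → J (J m) = m := by
    intro m hm
    have h1 := hJcast m
    have h2 := hJcast (J m)
    have h3 : (N - (J m : ℤ)) % n = ((N : ℤ) - (N - m) % n) % n := by rw [h1]
    have h4 : ((N : ℤ) - (N - m) % n) % n = (N - (N - m)) % n := by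
      conv_lhs => rw [Int.sub_emod, Int.emod_emod_of_dvd _ dvd_rfl, ← Int.sub_emod]
    have h5 : (N - (N - m)) % n = (m : ℤ) % n := by ring_nf
    have h6 : (m : ℤ) % n = m := Int.emod_eq_of_lt (by omega) (by exact_mod_cast hm)
    have : ((J (J m) : ℤ)) = m := by rw [h2, h3, h4, h5, h6]
    exact_mod_cast this
  -- pointwise identity
  have claim1 : ∀ m : ℕ, |Real.cos (t - (m : ℝ) * Real.pi / n)|
      = Real.sin (((J m : ℝ) + θ) * Real.pi / n) := by
    intro m
    set K : ℤ := (N - m) / n with hK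
    have hdm : (N : ℤ) - m = n * K + (J m : ℤ) := by
      rw [hJcast m, hK]; exact (Int.mul_ediv_add_emod _ _).symm
    have ht : t = Real.pi * a - Real.pi / 2 := by
      rw [ha]; field_simp [Real.pi_ne_zero]; ring
    have harg : t - (m : ℝ) * Real.pi / n
        = (((J m : ℝ) + θ) * Real.pi / n - Real.pi/2) + (K : ℝ) * Real.pi := by
      have hdm' : (N : ℝ) - m = n * K + (J m : ℝ) := by exact_mod_cast hdm
      have hna' : a = ((N : ℝ) + θ) / n := by
        rw [eq_div_iff hn', mul_comm]; exact hna
      rw [ht, hna']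
      field_simp
      rw [show (N:ℝ) = n * K + (J m : ℝ) + m by linarith]
      ring
    rw [harg, Real.cos_add_int_mul_pi]
    have : Real.cos (((J m : ℝ) + θ) * Real.pi / n - Real.pi/2)
        = Real.sin (((J m : ℝ) + θ) * Real.pi / n) := by
      rw [← Real.cos_neg, neg_sub, Real.cos_pi_div_two_sub]
    rw [this, abs_mul]
    have hsnn : 0 ≤ Real.sin (((J m : ℝ) + θ) * Real.pi / n) := by
      apply Real.sin_nonneg_of_nonneg_of_le_pi
      · positivity
      · have hjm : (J m : ℝ) + θ ≤ n := by
          have := hJlt m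
          have : (J m : ℝ) ≤ n - 1 := by exact_mod_cast Nat.le_pred_of_lt this
          linarith
        calc ((J m : ℝ) + θ) * Real.pi / n ≤ (n : ℝ) * Real.pi / n := by
              gcongr
          _ = Real.pi := by field_simp
    rw [abs_of_nonneg hsnn]
    have habs : |(-1 : ℝ) ^ K| = 1 := by
      rcases Int.even_or_odd K with h | h
      · rw [h.neg_one_zpow, abs_one]
      · rw [h.neg_one_zpow, abs_neg, abs_one]
    rw [habs, one_mul]
  -- reindex
  have hsum : ∑ m ∈ Finset.range n, |Real.cos (t - (m : ℝ) * Real.pi / n)|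
      = ∑ j ∈ Finset.range n, Real.sin (((j : ℝ) + θ) * Real.pi / n) := by
    rw [Finset.sum_congr rfl (fun m _ => claim1 m)]
    apply Finset.sum_nbij' (i := J) (j := J)
    · intro m hm; exact Finset.mem_range.mpr (hJlt m)
    · intro m hm; exact Finset.mem_range.mpr (hJlt m)
    · intro m hm; exact hJinv m (Finset.mem_range.mp hm)
    · intro m hm; exact hJinv m (Finset.mem_range.mp hm)
    · intro m hm; rfl
  rw [hsum]
  have hspos : 0 < Real.sin (Real.pi / (2*n)) := by
    apply Real.sin_pos_of_pos_of_lt_pi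
    · positivity
    · rw [div_lt_iff₀ (by positivity)]
      have h1n : (1:ℝ) ≤ n := by exact_mod_cast hn
      nlinarith [Real.pi_pos, h1n]
  rw [le_div_iff₀ hspos]
  rw [sum_sin_AP n hn θ]
  exact Real.cos_le_one _
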